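/- Assume the two-strain SI model hypotheses. If R_0^x > 1, R_0^y > 1 and R_0^x ≠ R_0^y, then the set of equilibria of the two-strain SI system is exactly {E_0, E_1, E_2}, where E_0 = (Λ/μ_S, 0, 0), E_1 = (1/r_x, a ↦ (μ_S(R_0^x − 1)/r_x)·π_x(a), 0) and E_2 = (1/r_y, 0, a ↦ (μ_S(R_0^y − 1)/r_y)·π_y(a)). -/

import Mathlib

open MeasureTheory Real Set

/-- Survival probability `π(a) = exp(-∫_0^a μ)`. -/
noncomputable def survival (μ : ℝ → ℝ) (a : ℝ) : ℝ :=
  Real.exp (-(∫ s in (0:ℝ)..a, μ s))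

/-- An equilibrium of the two-strain infection-age structured SI system:
`S ≥ 0`, `x, y ≥ 0` are continuously differentiable on `[0,∞)` with
`x' = -μₓ x`, `y' = -μ_y y`, renewal boundary conditions
`x 0 = S ∫ βₓ x`, `y 0 = S ∫ β_y y`, and the balance `Λ = μ_S S + x 0 + y 0`. -/
def IsEquilibrium (Λ μS : ℝ) (μx μy βx βy : ℝ → ℝ)
    (S : ℝ) (x y : ℝ → ℝ) : Prop :=
  0 ≤ S ∧ (∀ a, 0 ≤ a → 0 ≤ x a) ∧ (∀ a, 0 ≤ a → 0 ≤ y a) ∧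
  (∀ a, 0 ≤ a → HasDerivWithinAt x (-(μx a) * x a) (Ici 0) a) ∧
  (∀ a, 0 ≤ a → HasDerivWithinAt y (-(μy a) * y a) (Ici 0) a) ∧
  x 0 = S * ∫ a in Ici (0:ℝ), βx a * x a ∧
  y 0 = S * ∫ a in Ici (0:ℝ), βy a * y a ∧
  Λ = μS * S + x 0 + y 0

lemma ftc_deriv (μ : ℝ → ℝ) (hμ : ContinuousOn μ (Ici 0)) {a : ℝ} (ha : 0 ≤ a) :
    HasDerivWithinAt (fun t => ∫ s in (0:ℝ)..t, μ s) (μ a) (Ici 0) a := by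
  set g : ℝ → ℝ := fun s => μ (max s 0) with hg
  have hgc : Continuous g :=
    hμ.comp_continuous (continuous_id.max continuous_const) (fun s => mem_Ici.2 (le_max_right _ _))
  have hint : IntervalIntegrable g volume 0 a := hgc.intervalIntegrable _ _
  have hd : HasDerivAt (fun t => ∫ s in (0:ℝ)..t, g s) (g a) a :=
    intervalIntegral.integral_hasDerivAt_right hint
      (hgc.stronglyMeasurableAtFilter _ _) hgc.continuousAt
  have hga : g a = μ a := by simp [hg, max_eq_left ha]
  have heq : ∀ t ∈ Ici (0:ℝ), (∫ s in (0:ℝ)..t, μ s) = ∫ s in (0:ℝ)..t, g s := by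
    intro t ht
    apply intervalIntegral.integral_congr
    intro s hs
    rw [uIcc_of_le ht] at hs
    simp [hg, max_eq_left hs.1]
  rw [← hga]
  exact hd.hasDerivWithinAt.congr heq (heq a ha)

lemma survival_hasDeriv (μ : ℝ → ℝ) (hμ : ContinuousOn μ (Ici 0)) {a : ℝ} (ha : 0 ≤ a) :
    HasDerivWithinAt (survival μ) (-(μ a) * survival μ a) (Ici 0) a := by
  have h := ((ftc_deriv μ hμ ha).neg).exp
  show HasDerivWithinAt (fun t => Real.exp (-(∫ s in (0:ℝ)..t, μ s))) _ _ _
  simpa [survival, mul_comm] using h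

lemma survival_zero (μ : ℝ → ℝ) : survival μ 0 = 1 := by simp [survival]

lemma ode_unique (μ x : ℝ → ℝ) (hμ : ContinuousOn μ (Ici 0))
    (hx : ∀ a, 0 ≤ a → HasDerivWithinAt x (-(μ a) * x a) (Ici 0) a)
    {a : ℝ} (ha : 0 ≤ a) : x a = x 0 * survival μ a := by
  set E : ℝ → ℝ := fun t => Real.exp (∫ s in (0:ℝ)..t, μ s) with hE
  have hEpos : ∀ t, 0 < E t := fun t => Real.exp_pos _
  have hEd : ∀ t, 0 ≤ t → HasDerivWithinAt E (E t * μ t) (Ici 0) t := by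
    intro t ht
    have := (ftc_deriv μ hμ ht).exp
    simpa [hE] using this
  have hF : ∀ t, 0 ≤ t → HasDerivWithinAt (fun u => x u * E u) 0 (Ici 0) t := by
    intro t ht
    have h := (hx t ht).mul (hEd t ht)
    have : -(μ t) * x t * E t + x t * (E t * μ t) = 0 := by ring
    rwa [this] at h
  have key := constant_of_has_deriv_right_zero (f := fun u => x u * E u)
    (a := (0:ℝ)) (b := a)
    (fun t ht => ((hF t ht.1).continuousWithinAt).mono Icc_subset_Ici_self)
    (fun t ht => (hF t ht.1).mono (Ici_subset_Ici.2 ht.1))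
  have h0 : x a * E a = x 0 * E 0 := key a ⟨ha, le_refl a⟩
  have hE0 : E 0 = 1 := by simp [hE]
  have hs : survival μ a = (E a)⁻¹ := by
    simp [survival, hE, Real.exp_neg]
  rw [hs]
  field_simp
  rw [eq_div_iff (hEpos a).ne', h0, hE0, mul_one]

lemma int_scale (β s : ℝ → ℝ) (c : ℝ) :
    (∫ a in Ici (0:ℝ), β a * (c * s a)) = c * ∫ a in Ici (0:ℝ), β a * s a := by
  rw [← MeasureTheory.integral_const_mul]
  congr 1
  ext a
  ring

/-- **If `R₀ˣ > 1`, `R₀ʸ > 1` and `R₀ˣ ≠ R₀ʸ`, the set of equilibria of the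
two-strain SI system is exactly `{E₀, E₁, E₂}`.** -/
theorem equilibria_E0_E1_E2 (Λ μS μ0 : ℝ) (μx μy βx βy : ℝ → ℝ)
    (hΛ : 0 < Λ) (hμS : 0 < μS) (hμ0 : 0 < μ0) (hμSμ0 : μ0 ≤ μS)
    (hμxc : ContinuousOn μx (Ici 0)) (hμyc : ContinuousOn μy (Ici 0))
    (hμxb : ∀ a, 0 ≤ a → μ0 ≤ μx a) (hμyb : ∀ a, 0 ≤ a → μ0 ≤ μy a)
    (hβxm : Measurable βx) (hβym : Measurable βy)
    (hβxnn : ∀ a, 0 ≤ βx a) (hβynn : ∀ a, 0 ≤ βy a)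
    (Mx My : ℝ) (hβxM : ∀ a, βx a ≤ Mx) (hβyM : ∀ a, βy a ≤ My)
    (rx ry : ℝ)
    (hrx : rx = ∫ a in Ici (0:ℝ), βx a * survival μx a)
    (hry : ry = ∫ a in Ici (0:ℝ), βy a * survival μy a)
    (hrxpos : 0 < rx) (hrypos : 0 < ry)
    (R0x R0y : ℝ) (hR0x : R0x = Λ * rx / μS) (hR0y : R0y = Λ * ry / μS)
    (R0x R0y : ℝ) (hR0x : R0x = Λ * rx / μS) (hR0y : R0y = Λ * ry / μS)
    (hRx : 1 < R0x) (hRy : 1 < R0y) (hne : R0x ≠ R0y) :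
    IsEquilibrium Λ μS μx μy βx βy (Λ / μS) (fun _ => 0) (fun _ => 0) ∧
    IsEquilibrium Λ μS μx μy βx βy (1 / rx)
      (fun a => μS * (R0x - 1) / rx * survival μx a) (fun _ => 0) ∧
    IsEquilibrium Λ μS μx μy βx βy (1 / ry)
      (fun _ => 0) (fun a => μS * (R0y - 1) / ry * survival μy a) ∧
    ∀ S x y, IsEquilibrium Λ μS μx μy βx βy S x y →
      (S = Λ / μS ∧ (∀ a, 0 ≤ a → x a = 0) ∧ (∀ a, 0 ≤ a → y a = 0)) ∨
      (S = 1 / rx ∧ (∀ a, 0 ≤ a → x a = μS * (R0x - 1) / rx * survival μx a) ∧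
        (∀ a, 0 ≤ a → y a = 0)) ∨
      (S = 1 / ry ∧ (∀ a, 0 ≤ a → x a = 0) ∧
        (∀ a, 0 ≤ a → y a = μS * (R0y - 1) / ry * survival μy a)) := by
  have survnn : ∀ (μ : ℝ → ℝ) a, (0:ℝ) ≤ survival μ a := fun μ a => (Real.exp_pos _).le
  have hcx : 0 < μS * (R0x - 1) / rx := div_pos (mul_pos hμS (by linarith)) hrxpos
  have hcy : 0 < μS * (R0y - 1) / ry := div_pos (mul_pos hμS (by linarith)) hrypos
  refine ⟨?_, ?_, ?_, ?_⟩
  · -- E0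
    refine ⟨by positivity, fun a _ => le_refl 0, fun a _ => le_refl 0,
      fun a ha => ?_, fun a ha => ?_, by simp, by simp, by field_simp; ring⟩
    · simpa using (hasDerivWithinAt_const a (Ici (0:ℝ)) (0:ℝ))
    · simpa using (hasDerivWithinAt_const a (Ici (0:ℝ)) (0:ℝ))
  · -- E1
    refine ⟨by positivity, fun a _ => mul_nonneg hcx.le (survnn _ _), fun a _ => le_refl 0,
      fun a ha => ?_, fun a ha => ?_, ?_, by simp, ?_⟩
    · have h := (survival_hasDeriv μx hμxc ha).const_mul (μS * (R0x - 1) / rx)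
      have e : μS * (R0x - 1) / rx * (-(μx a) * survival μx a)
          = -(μx a) * (μS * (R0x - 1) / rx * survival μx a) := by ring
      rwa [e] at h
    · simpa using (hasDerivWithinAt_const a (Ici (0:ℝ)) (0:ℝ))
    · show μS * (R0x - 1) / rx * survival μx 0 = 1 / rx * ∫ a in Ici (0:ℝ), βx a * (μS * (R0x - 1) / rx * survival μx a)
      rw [int_scale, ← hrx, survival_zero]
      field_simp
    · show Λ = μS * (1 / rx) + μS * (R0x - 1) / rx * survival μx 0 + 0
      rw [survival_zero, hR0x]
      field_simp
      ring
  · -- E2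
    refine ⟨by positivity, fun a _ => le_refl 0, fun a _ => mul_nonneg hcy.le (survnn _ _),
      fun a ha => ?_, fun a ha => ?_, by simp, ?_, ?_⟩
    · simpa using (hasDerivWithinAt_const a (Ici (0:ℝ)) (0:ℝ))
    · have h := (survival_hasDeriv μy hμyc ha).const_mul (μS * (R0y - 1) / ry)
      have e : μS * (R0y - 1) / ry * (-(μy a) * survival μy a)
          = -(μy a) * (μS * (R0y - 1) / ry * survival μy a) := by ring
      rwa [e] at h
    · show μS * (R0y - 1) / ry * survival μy 0 = 1 / ry * ∫ a in Ici (0:ℝ), βy a * (μS * (R0y - 1) / ry * survival μy a)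
      rw [int_scale, ← hry, survival_zero]
      field_simp
    · show Λ = μS * (1 / ry) + 0 + μS * (R0y - 1) / ry * survival μy 0
      rw [survival_zero, hR0y]
      field_simp
      ring
  · -- uniqueness
    rintro S x y ⟨hS, hxnn, hynn, hxd, hyd, hx0, hy0, hbal⟩
    have hxa : ∀ a, 0 ≤ a → x a = x 0 * survival μx a :=
      fun a ha => ode_unique μx x hμxc hxd ha
    have hya : ∀ a, 0 ≤ a → y a = y 0 * survival μy a :=
      fun a ha => ode_unique μy y hμyc hyd ha
    have hintx : (∫ a in Ici (0:ℝ), βx a * x a) = x 0 * rx := by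
      rw [hrx, ← int_scale]
      exact MeasureTheory.setIntegral_congr_fun measurableSet_Ici
        (fun a ha => by rw [hxa a ha])
    have hinty : (∫ a in Ici (0:ℝ), βy a * y a) = y 0 * ry := by
      rw [hry, ← int_scale]
      exact MeasureTheory.setIntegral_congr_fun measurableSet_Ici
        (fun a ha => by rw [hya a ha])
    rw [hintx] at hx0
    rw [hinty] at hy0
    by_cases hx0z : x 0 = 0
    · by_cases hy0z : y 0 = 0
      · left
        refine ⟨?_, fun a ha => by rw [hxa a ha, hx0z, zero_mul],
          fun a ha => by rw [hya a ha, hy0z, zero_mul]⟩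
        rw [hx0z, hy0z] at hbal
        field_simp at hbal ⊢
        linarith
      · right; right
        have hSry : S * ry = 1 := by
          have : y 0 * (1 - S * ry) = 0 := by linarith [hy0]
          rcases mul_eq_zero.1 this with h | h
          · exact absurd h hy0z
          · linarith
        have hSv : S = 1 / ry := by field_simp; linarith [hSry]
        have hy0v : y 0 = μS * (R0y - 1) / ry := by
          rw [hx0z, hSv] at hbal
          rw [hR0y]
          field_simp at hbal ⊢
          linarith
        exact ⟨hSv, fun a ha => by rw [hxa a ha, hx0z, zero_mul],
          fun a ha => by rw [hya a ha, hy0v]⟩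
    · have hSrx : S * rx = 1 := by
        have : x 0 * (1 - S * rx) = 0 := by linarith [hx0]
        rcases mul_eq_zero.1 this with h | h
        · exact absurd h hx0z
        · linarith
      have hSv : S = 1 / rx := by field_simp; linarith [hSrx]
      have hy0z : y 0 = 0 := by
        by_contra hy0z
        have hSry : S * ry = 1 := by
          have : y 0 * (1 - S * ry) = 0 := by linarith [hy0]
          rcases mul_eq_zero.1 this with h | h
          · exact absurd h hy0z
          · linarith
        have : rx = ry := by
          have h1 : S * rx = S * ry := by rw [hSrx, hSry]
          have hSne : S ≠ 0 := by
            rw [hSv]; positivity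
          exact mul_left_cancel₀ hSne h1
        exact hne (by rw [hR0x, hR0y, this])
      right; left
      have hx0v : x 0 = μS * (R0x - 1) / rx := by
        rw [hy0z, hSv] at hbal
        rw [hR0x]
        field_simp at hbal ⊢
        linarith
      exact ⟨hSv, fun a ha => by rw [hxa a ha, hx0v],
        fun a ha => by rw [hya a ha, hy0z, zero_mul]⟩
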